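/- Let p be a prime, let χ be a primitive Dirichlet character modulo p², and let ψ be a primitive (hence nontrivial) Dirichlet character modulo p. Then |∑_{u,y ∈ ℤ/pℤ} ψ(u·y) · χ(1 + p·ỹ) · χ(1 − p·ũ) · conj(χ)(1 + p²·ũ·ỹ)| ≤ p, where ũ, ỹ ∈ {0,…,p−1} are the representatives of u and y, and the arguments of χ and conj(χ) are taken in ℤ/p²ℤ. -/

import Mathlib

open DirichletCharacter Finset

section aux

variable (p : ℕ) [Fact p.Prime]

/-- If `a ≡ b (mod p)` then `1 + p a = 1 + p b` in `ZMod (p^2)`. -/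
lemma aux_cast_eq {a b : ℤ} (h : (p : ℤ) ∣ (a - b)) :
    ((1 + (p : ℤ) * a : ℤ) : ZMod (p ^ 2)) = ((1 + (p : ℤ) * b : ℤ) : ZMod (p ^ 2)) := by
  obtain ⟨c, hc⟩ := h
  rw [ZMod.intCast_eq_intCast_iff, Int.ModEq]
  refine Int.modEq_iff_dvd.mpr ⟨-c, ?_⟩
  push_cast
  linear_combination -(p : ℤ) * hc

/-- The additive character `a ↦ χ(1 + p·ã)` of `ZMod p`. -/
noncomputable def auxChar (χ : DirichletCharacter ℂ (p ^ 2)) : AddChar (ZMod p) ℂ where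
  toFun a := χ (((1 + (p : ℤ) * (a.val : ℤ) : ℤ) : ZMod (p ^ 2)))
  map_zero_eq_one' := by simp
  map_add_eq_mul' a b := by
    have h1 : ((1 + (p : ℤ) * (((a + b).val : ℤ)) : ℤ) : ZMod (p ^ 2))
        = (((1 + (p : ℤ) * (a.val : ℤ)) * (1 + (p : ℤ) * (b.val : ℤ)) : ℤ) : ZMod (p ^ 2)) := by
      have hd : (p : ℤ) ∣ (((a.val : ℤ) + (b.val : ℤ)) - ((a + b).val : ℤ)) := by
        rw [← ZMod.intCast_zmod_eq_zero_iff_dvd]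
        push_cast
        simp [ZMod.natCast_val, ZMod.cast_id]
      obtain ⟨c, hc⟩ := hd
      rw [ZMod.intCast_eq_intCast_iff]
      refine Int.modEq_iff_dvd.mpr ⟨c + a.val * b.val, ?_⟩
      push_cast
      linear_combination (p : ℤ) * hc
    rw [h1]
    push_cast
    rw [map_mul]

@[simp] lemma auxChar_apply (χ : DirichletCharacter ℂ (p ^ 2)) (a : ZMod p) :
    auxChar p χ a = χ (((1 + (p : ℤ) * (a.val : ℤ) : ℤ) : ZMod (p ^ 2))) := rfl

end aux

/-- For p prime, χ primitive modulo p² and ψ primitive modulo p, the bound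
|∑_{u,y ∈ ℤ/pℤ} ψ(uy) · χ(1+pỹ) · χ(1−pũ) · conj(χ)(1+p²ũỹ)| ≤ p holds,
where ũ, ỹ ∈ {0,…,p−1} are the representatives of u and y and the arguments of
χ are taken in ℤ/p²ℤ. -/
theorem conj_char_sum_bound (p : ℕ) [Fact p.Prime]
    (χ : DirichletCharacter ℂ (p ^ 2)) (hχ : χ.IsPrimitive)
    (ψ : DirichletCharacter ℂ p) (hψ : ψ.IsPrimitive) :
    ‖(∑ u : ZMod p, ∑ y : ZMod p,
      ψ (u * y) * χ (((1 + (p : ℤ) * (y.val : ℤ) : ℤ) : ZMod (p ^ 2))) *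
        χ (((1 - (p : ℤ) * (u.val : ℤ) : ℤ) : ZMod (p ^ 2))) *
        (starRingEnd ℂ)
          (χ (((1 + (p : ℤ) ^ 2 * (u.val : ℤ) * (y.val : ℤ) : ℤ) : ZMod (p ^ 2)))))‖ ≤ p := by
  have hp : p.Prime := Fact.out
  haveI : NeZero (p ^ 2) := ⟨pow_ne_zero 2 hp.ne_zero⟩
  set E := auxChar p χ with hE
  -- ψ is nontrivial
  have hψne : ψ ≠ 1 := by
    intro h
    have := hψ
    rw [IsPrimitive, h, conductor_one] at this
    exact hp.one_lt.ne' this.symm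
  -- E is nontrivial
  have hE1 : E ≠ 1 := by
    intro h
    have hFT : FactorsThrough χ p := by
      have hd : p ∣ p ^ 2 := dvd_pow_self p two_ne_zero
      rw [factorsThrough_iff_ker_unitsMap hd]
      intro x hx
      rw [MonoidHom.mem_ker] at hx ⊢
      have hx' : (ZMod.castHom hd (ZMod p)) (x : ZMod (p ^ 2)) = 1 := by
        have := congrArg (Units.val) hx
        simpa [ZMod.unitsMap] using this
      -- write x = 1 + p·a
      set z : ℕ := (x : ZMod (p ^ 2)).val with hz
      have hcast : ((z : ℕ) : ZMod p) = 1 := by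
        rw [ZMod.castHom_apply, ZMod.cast_eq_val] at hx'
        exact hx'
      have hdvd : (p : ℤ) ∣ ((z : ℤ) - 1) := by
        rw [← ZMod.intCast_zmod_eq_zero_iff_dvd]
        push_cast
        rw [hcast]
        ring
      obtain ⟨k, hk⟩ := hdvd
      set a : ZMod p := (k : ZMod p) with ha
      have heq : ((1 + (p : ℤ) * (a.val : ℤ) : ℤ) : ZMod (p ^ 2)) = (x : ZMod (p ^ 2)) := by
        have h1 : ((1 + (p : ℤ) * (a.val : ℤ) : ℤ) : ZMod (p ^ 2))
            = ((1 + (p : ℤ) * k : ℤ) : ZMod (p ^ 2)) := by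
          refine aux_cast_eq p ?_
          rw [← ZMod.intCast_zmod_eq_zero_iff_dvd]
          push_cast
          simp [ha, ZMod.natCast_val, ZMod.cast_id]
        rw [h1]
        have h2 : (1 + (p : ℤ) * k : ℤ) = (z : ℤ) := by omega
        rw [h2]
        push_cast
        simp [hz, ZMod.natCast_val, ZMod.cast_id]
      have hEa : E a = 1 := by rw [h]; simp
      rw [hE, auxChar_apply, heq] at hEa
      ext
      rw [MulChar.coe_toUnitHom, hEa, Units.val_one]
    have hle : conductor χ ≤ p := Nat.sInf_le hFT
    rw [hχ] at hle
    nlinarith [hp.two_le]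
  have hEprim : E.IsPrimitive := AddChar.IsPrimitive.of_ne_one hE1
  have hEinvprim : E⁻¹.IsPrimitive :=
    AddChar.IsPrimitive.of_ne_one (by simpa using hE1)
  -- |gaussSum ψ e|² = p for primitive e
  have key : ∀ e : AddChar (ZMod p) ℂ, e.IsPrimitive →
      ‖gaussSum ψ e‖ ^ 2 = (p : ℝ) := by
    intro e he
    have h1 : gaussSum ψ e * gaussSum ψ⁻¹ e⁻¹ = (Fintype.card (ZMod p) : ℂ) :=
      gaussSum_mul_gaussSum_eq_card hψne he
    have h2 : gaussSum ψ⁻¹ e⁻¹ = (starRingEnd ℂ) (gaussSum ψ e) := by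
      rw [gaussSum, gaussSum, map_sum]
      refine Finset.sum_congr rfl fun a _ => ?_
      rw [map_mul]
      congr 1
      · rw [← MulChar.star_eq_inv]
        rfl
      · rw [AddChar.starComp_apply (by simp [ZMod.ringChar_zmod_n]; exact hp.pos)]
    rw [h2, Complex.mul_conj, ZMod.card] at h1
    rw [Complex.sq_norm]
    exact_mod_cast h1
  -- rewrite the sum as a product of Gauss sums
  have hsum : (∑ u : ZMod p, ∑ y : ZMod p,
      ψ (u * y) * χ (((1 + (p : ℤ) * (y.val : ℤ) : ℤ) : ZMod (p ^ 2))) *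
        χ (((1 - (p : ℤ) * (u.val : ℤ) : ℤ) : ZMod (p ^ 2))) *
        (starRingEnd ℂ)
          (χ (((1 + (p : ℤ) ^ 2 * (u.val : ℤ) * (y.val : ℤ) : ℤ) : ZMod (p ^ 2)))))
      = gaussSum ψ E⁻¹ * gaussSum ψ E := by
    rw [gaussSum, gaussSum, Finset.sum_mul_sum]
    refine Finset.sum_congr rfl fun u _ => Finset.sum_congr rfl fun y _ => ?_
    have h0 : ((1 + (p : ℤ) ^ 2 * (u.val : ℤ) * (y.val : ℤ) : ℤ) : ZMod (p ^ 2)) = 1 := by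
      have hp0 : ((p : ZMod (p ^ 2))) ^ 2 = 0 := by
        rw [← Nat.cast_pow, ZMod.natCast_self]
      push_cast
      rw [hp0]
      ring
    have h1 : χ (((1 - (p : ℤ) * (u.val : ℤ) : ℤ) : ZMod (p ^ 2))) = E⁻¹ u := by
      rw [AddChar.inv_apply, hE, auxChar_apply]
      have h2 : ((1 - (p : ℤ) * (u.val : ℤ) : ℤ) : ZMod (p ^ 2))
          = ((1 + (p : ℤ) * (-(u.val : ℤ)) : ℤ) : ZMod (p ^ 2)) := by
        exact congrArg _ (by ring)
      rw [h2]
      congr 1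
      refine aux_cast_eq p ?_
      rw [← ZMod.intCast_zmod_eq_zero_iff_dvd]
      push_cast
      simp [ZMod.natCast_val, ZMod.cast_id]
    rw [h0, map_one, map_one, map_mul, h1]
    simp only [hE, auxChar_apply]
    ring
  rw [hsum, norm_mul]
  have h1 := key E⁻¹ hEinvprim
  have h2 := key E hEprim
  have habs : ‖gaussSum ψ E⁻¹‖ * ‖gaussSum ψ E‖ = (p : ℝ) := by
    have hnn1 := norm_nonneg (gaussSum ψ E⁻¹)
    have hnn2 := norm_nonneg (gaussSum ψ E)
    have hpnn : (0 : ℝ) ≤ (p : ℝ) := Nat.cast_nonneg p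
    have h3 : (‖gaussSum ψ E⁻¹‖ * ‖gaussSum ψ E‖) ^ 2 = (p : ℝ) ^ 2 := by
      rw [mul_pow, h1, h2]; ring
    exact (sq_eq_sq₀ (mul_nonneg hnn1 hnn2) hpnn).mp h3
  rw [habs]
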